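/- Let R, l > 0 and let u be a unit vector in three-dimensional Euclidean space (EuclideanSpace ℝ (Fin 3), ‖u‖ = 1). Then the Lebesgue measure of the set {x | ∃ t ∈ [0, l], x + t·u ∈ closedBall 0 R} equals (4/3)πR³ + πR²l (the volume of the capsule, i.e. the Minkowski sum of the ball of radius R with a segment of length l). -/

import Mathlib

open Metric MeasureTheory Real intervalIntegral

noncomputable def capD (l s : ℝ) : ℝ := max (max s (-(s + l))) 0

lemma capD_nonneg (l s : ℝ) : 0 ≤ capD l s := le_max_right _ _

@[fun_prop] lemma capD_continuous (l : ℝ) : Continuous (capD l) := by unfold capD; fun_prop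

lemma capD_key (l : ℝ) (hl : 0 < l) (s c : ℝ) :
    (∃ t ∈ Set.Icc (0:ℝ) l, (s + t) ^ 2 ≤ c) ↔ capD l s ^ 2 ≤ c := by
  constructor
  · rintro ⟨t, ⟨ht0, htl⟩, h⟩
    refine le_trans ?_ h
    have h1 : capD l s ≤ |s + t| := by
      unfold capD
      rw [max_le_iff, max_le_iff]
      refine ⟨⟨le_trans (by linarith) (le_abs_self _), ?_⟩, abs_nonneg _⟩
      have : -(s + l) ≤ -(s + t) := by linarith
      exact this.trans (neg_le_abs _)
    calc capD l s ^ 2 ≤ |s + t| ^ 2 := by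
          exact pow_le_pow_left₀ (capD_nonneg l s) h1 2
      _ = (s + t) ^ 2 := sq_abs _
  · intro h
    rcases le_or_gt 0 s with hs | hs
    · refine ⟨0, ⟨le_refl _, hl.le⟩, le_trans ?_ h⟩
      have : capD l s = s := by
        unfold capD
        rw [max_eq_left (le_max_of_le_left hs), max_eq_left (by linarith)]
      rw [this, add_zero]
    rcases le_or_gt s (-l) with hsl | hsl
    · refine ⟨l, ⟨hl.le, le_refl _⟩, le_trans ?_ h⟩
      have : capD l s = -(s + l) := by
        unfold capD
        rw [max_eq_right (show s ≤ -(s+l) by linarith),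
          max_eq_left (by linarith : (0:ℝ) ≤ -(s+l))]
      rw [this, neg_sq]
    · refine ⟨-s, ⟨by linarith, by linarith⟩, le_trans ?_ h⟩
      simp [add_neg_cancel]
      positivity

lemma slice_set_empty {c : ℝ} (hc : c < 0) {ι : Type*} (z : ι → ℝ) (i j : ι) :
    ¬ (z i ^ 2 + z j ^ 2 ≤ c) := by
  nlinarith [sq_nonneg (z i), sq_nonneg (z j)]

lemma slice_volume (c : ℝ) :
    volume {y : Fin 2 → ℝ | y 0 ^ 2 + y 1 ^ 2 ≤ c} = ENNReal.ofReal (π * c) := by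
  have hmp := (EuclideanSpace.volume_preserving_symm_measurableEquiv_toLp (Fin 2))
  rcases le_or_gt 0 c with hc | hc
  · have key : volume {y : Fin 2 → ℝ | y 0 ^ 2 + y 1 ^ 2 ≤ c}
        = volume {z : EuclideanSpace ℝ (Fin 2) | z 0 ^ 2 + z 1 ^ 2 ≤ c} := by
      rw [← hmp.measure_preimage]
      · rfl
      · refine (IsClosed.measurableSet ?_).nullMeasurableSet
        exact isClosed_le (by fun_prop) continuous_const
    rw [key]
    have hball : {z : EuclideanSpace ℝ (Fin 2) | z 0 ^ 2 + z 1 ^ 2 ≤ c}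
        = closedBall (0 : EuclideanSpace ℝ (Fin 2)) (Real.sqrt c) := by
      ext z
      rw [mem_closedBall_zero_iff, EuclideanSpace.norm_eq,
        Set.mem_setOf_eq, ← Real.sqrt_le_sqrt_iff hc]
      congr! 2
      simp [Fin.sum_univ_two, Real.norm_eq_abs, sq_abs]
    rw [hball, EuclideanSpace.volume_closedBall, Fintype.card_fin]
    have hg : Real.sqrt π ^ 2 / Real.Gamma ((2:ℕ)/2 + 1) = π := by
      rw [show (((2:ℕ):ℝ)/2+1) = 2 by norm_num, Real.Gamma_two,
        Real.sq_sqrt Real.pi_nonneg, div_one]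
    rw [hg, ← ENNReal.ofReal_pow (Real.sqrt_nonneg c), Real.sq_sqrt hc,
      ← ENNReal.ofReal_mul hc, mul_comm]
  · have h1 : {y : Fin 2 → ℝ | y 0 ^ 2 + y 1 ^ 2 ≤ c} = ∅ := by
      ext y; simpa using slice_set_empty hc y 0 1
    rw [h1, measure_empty, eq_comm, ENNReal.ofReal_eq_zero]
    exact mul_nonpos_of_nonneg_of_nonpos Real.pi_nonneg hc.le

lemma capD_lintegral (R l : ℝ) (hR : 0 < R) (hl : 0 < l) :
    ∫⁻ s : ℝ, ENNReal.ofReal (π * (R ^ 2 - capD l s ^ 2))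
      = ENNReal.ofReal ((4 / 3) * π * R ^ 3 + π * R ^ 2 * l) := by
  set g : ℝ → ℝ := fun s => max (π * (R ^ 2 - capD l s ^ 2)) 0 with hg
  have hofReal : ∀ s, ENNReal.ofReal (π * (R ^ 2 - capD l s ^ 2)) = ENNReal.ofReal (g s) := by
    intro s
    rcases le_total (π * (R ^ 2 - capD l s ^ 2)) 0 with h | h
    · rw [ENNReal.ofReal_of_nonpos h, hg]; simp [max_eq_right h]
    · rw [hg]; simp [max_eq_left h]
  have hgc : Continuous g := (continuous_const.mul (continuous_const.sub
    ((capD_continuous l).pow 2))).max continuous_const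
  have hsupp : ∀ s, s ∉ Set.Icc (-(l + R)) R → g s = 0 := by
    intro s hs
    rw [Set.mem_Icc, not_and_or, not_le, not_le] at hs
    have hd : R < capD l s := by
      rcases hs with hs | hs
      · calc R < -(s + l) := by linarith
          _ ≤ capD l s := le_max_of_le_left (le_max_right _ _)
      · exact lt_of_lt_of_le hs (le_max_of_le_left (le_max_left _ _))
    rw [hg]
    refine max_eq_right (mul_nonpos_of_nonneg_of_nonpos Real.pi_nonneg ?_)
    nlinarith
  have hcs : HasCompactSupport g :=
    HasCompactSupport.intro isCompact_Icc hsupp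
  have hint : Integrable g := hgc.integrable_of_hasCompactSupport hcs
  rw [funext hofReal] at *
  rw [← ofReal_integral_eq_lintegral_ofReal hint
    (Filter.Eventually.of_forall fun s => le_max_right _ _)]
  congr 1
  have hle1 : (-(l + R)) ≤ -l := by linarith
  have hle2 : (-l : ℝ) ≤ 0 := by linarith
  have hle3 : (0:ℝ) ≤ R := hR.le
  have hIcc : ∫ s, g s = ∫ s in (-(l + R))..R, g s := by
    rw [← setIntegral_eq_integral_of_forall_compl_eq_zero hsupp,
      integral_Icc_eq_integral_Ioc, intervalIntegral.integral_of_le (by linarith)]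
  rw [hIcc]
  rw [← intervalIntegral.integral_add_adjacent_intervals (b := -l)
      (hint.intervalIntegrable) (hint.intervalIntegrable),
    ← intervalIntegral.integral_add_adjacent_intervals (a := -l) (b := 0)
      (hint.intervalIntegrable) (hint.intervalIntegrable)]
  have hI1 : ∫ s in (-(l + R))..(-l), g s = π * ((2/3) * R ^ 3) := by
    have : ∀ s ∈ Set.uIcc (-(l + R)) (-l), g s = π * (R ^ 2 - (s + l) ^ 2) := by
      intro s hs
      rw [Set.uIcc_of_le hle1, Set.mem_Icc] at hs
      have hd : capD l s = -(s + l) := by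
        unfold capD
        rw [max_eq_right (show s ≤ -(s+l) by linarith),
          max_eq_left (by linarith : (0:ℝ) ≤ -(s+l))]
      rw [hg]
      simp only
      rw [hd, neg_sq]
      refine max_eq_left (mul_nonneg Real.pi_nonneg ?_)
      nlinarith [hs.1, hs.2]
    rw [intervalIntegral.integral_congr this]
    rw [intervalIntegral.integral_const_mul]
    have := intervalIntegral.integral_comp_add_right (a := -(l+R)) (b := -l)
      (fun y => R ^ 2 - y ^ 2) l
    rw [this]
    rw [intervalIntegral.integral_sub intervalIntegrable_const
      (intervalIntegrable_pow 2)]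
    rw [intervalIntegral.integral_const, integral_pow]
    simp only [smul_eq_mul, integral_pow]
    ring
  have hI2 : ∫ s in (-l)..(0:ℝ), g s = π * (R ^ 2 * l) := by
    have : ∀ s ∈ Set.uIcc (-l) (0:ℝ), g s = π * R ^ 2 := by
      intro s hs
      rw [Set.uIcc_of_le hle2, Set.mem_Icc] at hs
      have hd : capD l s = 0 := by
        unfold capD
        rw [max_eq_right]
        rw [max_le_iff]
        constructor <;> linarith [hs.1, hs.2]
      rw [hg]
      simp only
      rw [hd]
      simp only [ne_eq, OfNat.ofNat_ne_zero, not_false_eq_true, zero_pow, sub_zero]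
      exact max_eq_left (by positivity)
    rw [intervalIntegral.integral_congr this, intervalIntegral.integral_const]
    simp only [smul_eq_mul, integral_pow]
    ring
  have hI3 : ∫ s in (0:ℝ)..R, g s = π * ((2/3) * R ^ 3) := by
    have : ∀ s ∈ Set.uIcc (0:ℝ) R, g s = π * (R ^ 2 - s ^ 2) := by
      intro s hs
      rw [Set.uIcc_of_le hle3, Set.mem_Icc] at hs
      have hd : capD l s = s := by
        unfold capD
        rw [max_eq_left (le_max_of_le_left hs.1), max_eq_left (by linarith [hs.1])]
      rw [hg]
      simp only
      rw [hd]
      refine max_eq_left (mul_nonneg Real.pi_nonneg ?_)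
      nlinarith [hs.1, hs.2]
    rw [intervalIntegral.integral_congr this, intervalIntegral.integral_const_mul,
      intervalIntegral.integral_sub intervalIntegrable_const
        (intervalIntegrable_pow 2),
      intervalIntegral.integral_const, integral_pow]
    simp only [smul_eq_mul, integral_pow]
    ring
  rw [hI1, hI2, hI3]
  ring

theorem segment_hitting_measure_ball
    (R l : ℝ) (hR : 0 < R) (hl : 0 < l)
    (u : EuclideanSpace ℝ (Fin 3)) (hu : ‖u‖ = 1) :
    volume {x : EuclideanSpace ℝ (Fin 3) |
        ∃ t ∈ Set.Icc (0 : ℝ) l, x + t • u ∈ closedBall (0 : EuclideanSpace ℝ (Fin 3)) R}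
      = ENNReal.ofReal ((4 / 3) * Real.pi * R ^ 3 + Real.pi * R ^ 2 * l) := by
  classical
  -- get an orthonormal basis whose first vector is `u`
  have horth : Orthonormal ℝ (({0} : Set (Fin 3)).restrict (fun _ : Fin 3 => u)) := by
    constructor
    · intro i; exact hu
    · intro i j hij
      exact absurd (Subtype.ext (i.2.trans j.2.symm)) hij
  obtain ⟨b, hb⟩ := horth.exists_orthonormalBasis_extension_of_card_eq (by simp)
  have hb0 : b 0 = u := hb 0 rfl
  -- the sets
  set U : Set (ℝ × (Fin 2 → ℝ)) :=
    {p | capD l p.1 ^ 2 + p.2 0 ^ 2 + p.2 1 ^ 2 ≤ R ^ 2} with hU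
  have hUm : MeasurableSet U := by
    refine (isClosed_le ?_ continuous_const).measurableSet
    fun_prop
  set T : Set (Fin 3 → ℝ) :=
    {f | capD l (f 0) ^ 2 + f 1 ^ 2 + f 2 ^ 2 ≤ R ^ 2} with hT
  have hTm : MeasurableSet T := by
    refine (isClosed_le ?_ continuous_const).measurableSet
    fun_prop
  -- identify the hitting set
  have hset : {x : EuclideanSpace ℝ (Fin 3) |
      ∃ t ∈ Set.Icc (0 : ℝ) l, x + t • u ∈ closedBall (0 : EuclideanSpace ℝ (Fin 3)) R}
      = ⇑b.repr ⁻¹' (⇑(MeasurableEquiv.toLp 2 (Fin 3 → ℝ)).symm ⁻¹' T) := by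
    ext x
    simp only [Set.mem_setOf_eq, Set.mem_preimage]
    set z : EuclideanSpace ℝ (Fin 3) := b.repr x with hz
    have key : ∀ t : ℝ, (x + t • u ∈ closedBall (0 : EuclideanSpace ℝ (Fin 3)) R)
        ↔ (z 0 + t) ^ 2 ≤ R ^ 2 - z 1 ^ 2 - z 2 ^ 2 := by
      intro t
      rw [mem_closedBall_zero_iff, ← b.repr.norm_map (x + t • u)]
      have hrepr : b.repr (x + t • u) = z + t • (EuclideanSpace.single 0 (1:ℝ) : EuclideanSpace ℝ (Fin 3)) := by
        rw [map_add, b.repr.map_smul, ← hb0, b.repr_self]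
      rw [hrepr, EuclideanSpace.norm_eq, Real.sqrt_le_iff]
      have happ : ∀ i : Fin 3, ‖(z + t • (EuclideanSpace.single 0 (1:ℝ) : EuclideanSpace ℝ (Fin 3))) i‖ ^ 2
          = (z i + t * (if i = 0 then (1:ℝ) else 0)) ^ 2 := by
        intro i
        rw [Real.norm_eq_abs, sq_abs]
        congr 1
        simp [EuclideanSpace.single_apply]
      rw [Fin.sum_univ_three, happ 0, happ 1, happ 2]
      simp only [if_pos rfl, if_true, eq_self_iff_true, if_neg (show (1:Fin 3) ≠ 0 by decide),
        if_neg (show (2:Fin 3) ≠ 0 by decide), mul_one, mul_zero, add_zero]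
      constructor
      · rintro ⟨-, h⟩; linarith
      · intro h; exact ⟨hR.le, by linarith⟩
    constructor
    · rintro ⟨t, ht, hmem⟩
      have h2 := (capD_key l hl (z 0) (R ^ 2 - z 1 ^ 2 - z 2 ^ 2)).mp
        ⟨t, ht, (key t).mp hmem⟩
      show capD l (z 0) ^ 2 + z 1 ^ 2 + z 2 ^ 2 ≤ R ^ 2
      linarith
    · intro hmem
      have hmem' : capD l (z 0) ^ 2 ≤ R ^ 2 - z 1 ^ 2 - z 2 ^ 2 := by
        have : capD l (z 0) ^ 2 + z 1 ^ 2 + z 2 ^ 2 ≤ R ^ 2 := hmem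
        linarith
      obtain ⟨t, ht, h2⟩ := (capD_key l hl (z 0) (R ^ 2 - z 1 ^ 2 - z 2 ^ 2)).mpr hmem'
      exact ⟨t, ht, (key t).mpr h2⟩
  rw [hset]
  rw [b.measurePreserving_repr.measure_preimage
    (((MeasurableEquiv.toLp 2 (Fin 3 → ℝ)).symm.measurable hTm).nullMeasurableSet)]
  rw [(EuclideanSpace.volume_preserving_symm_measurableEquiv_toLp (Fin 3)).measure_preimage
    hTm.nullMeasurableSet]
  -- pass to the product space
  have hTU : T = ⇑(MeasurableEquiv.piFinSuccAbove (fun _ : Fin 3 => ℝ) 0) ⁻¹' U := by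
    ext f
    simp only [hT, hU, Set.mem_setOf_eq, Set.mem_preimage,
      MeasurableEquiv.piFinSuccAbove_apply]
    rfl
  rw [hTU, (volume_preserving_piFinSuccAbove (fun _ : Fin 3 => ℝ) 0).measure_preimage
    hUm.nullMeasurableSet]
  rw [MeasureTheory.Measure.volume_eq_prod, Measure.prod_apply hUm]
  have hslice : ∀ s : ℝ, volume (Prod.mk s ⁻¹' U)
      = ENNReal.ofReal (π * (R ^ 2 - capD l s ^ 2)) := by
    intro s
    have : Prod.mk s ⁻¹' U = {y : Fin 2 → ℝ | y 0 ^ 2 + y 1 ^ 2 ≤ R ^ 2 - capD l s ^ 2} := by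
      ext y
      simp only [hU, Set.mem_preimage, Set.mem_setOf_eq]
      constructor <;> intro <;> linarith
    rw [this, slice_volume]
  simp_rw [hslice]
  exact capD_lintegral R l hR hl
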